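/- Let u ⊆ {1,...,N} and let z be a real number with |z| · max{|λ_j| : j=1,...,N} < 1. Then I − zA is invertible and the minor of the resolvent satisfies det(((I − zA)^{−1})_{uu}) = ∑_{σ∈S_N} ε(σ) (∏_{j=1}^N p_{jσ(j)}) ∏_{i∈u} (1 − zλ_{σ(i)})^{−1}; that is, it equals the homogeneous moment generating function of the joint spectral measure on the coordinates in u. -/

import Mathlib

open Matrix BigOperators

/-- For `|z| max|λ_j| < 1`, the matrix `I − zA` is invertible and the minor of the resolvent
is the homogeneous moment generating function of the joint spectral measure:
`det(((I − zA)^{-1})_{uu}) = ∑_σ ε(σ)(∏_j p_{jσ(j)}) ∏_{i∈u} (1 − zλ_{σ(i)})^{-1}`. -/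
theorem det_resolvent_block_eq_mgf (N : ℕ)
    (A P : Matrix (Fin N) (Fin N) ℝ) (lam : Fin N → ℝ)
    (hsymm : A.IsSymm)
    (hdecomp : A = P * Matrix.diagonal lam * Pᵀ)
    (horth : P * Pᵀ = 1)
    (hdet : P.det = 1)
    (u : Finset (Fin N)) (z : ℝ)
    (hz : ∀ j : Fin N, |z| * |lam j| < 1) :
    IsUnit ((1 : Matrix (Fin N) (Fin N) ℝ) - z • A).det ∧
    Matrix.det ((((1 : Matrix (Fin N) (Fin N) ℝ) - z • A)⁻¹).submatrix
        (fun i : {i // i ∈ u} => (i : Fin N)) (fun i : {i // i ∈ u} => (i : Fin N)))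
      = ∑ σ : Equiv.Perm (Fin N),
          ((Equiv.Perm.sign σ : ℤ) : ℝ) * (∏ j : Fin N, P j (σ j)) *
            ∏ i ∈ u, (1 - z * lam (σ i))⁻¹ := by
  classical
  set d : Fin N → ℝ := fun j => 1 - z * lam j with hd
  have hdne : ∀ j, d j ≠ 0 := by
    intro j
    have h1 : |z * lam j| < 1 := by rw [abs_mul]; exact hz j
    have h2 : z * lam j < 1 := lt_of_le_of_lt (le_abs_self _) h1
    simp only [hd]; intro h; linarith
  have hPt : Pᵀ * P = 1 := mul_eq_one_comm.mp horth
  have hdiag : Matrix.diagonal d = 1 - z • Matrix.diagonal lam := by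
    ext i j
    by_cases h : i = j <;>
      simp [Matrix.diagonal_apply, Matrix.one_apply, h, hd]
  have hfact : (1 : Matrix (Fin N) (Fin N) ℝ) - z • A = P * Matrix.diagonal d * Pᵀ := by
    rw [hdecomp, hdiag]
    simp [Matrix.mul_sub, Matrix.sub_mul, Matrix.mul_smul, Matrix.smul_mul, horth]
  have hdetfact : ((1 : Matrix (Fin N) (Fin N) ℝ) - z • A).det = ∏ j, d j := by
    rw [hfact, Matrix.det_mul, Matrix.det_mul, hdet, Matrix.det_transpose, hdet,
      Matrix.det_diagonal, one_mul, mul_one]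
  have hu : IsUnit ((1 : Matrix (Fin N) (Fin N) ℝ) - z • A).det := by
    rw [hdetfact, isUnit_iff_ne_zero]
    exact Finset.prod_ne_zero_iff.mpr fun j _ => hdne j
  refine ⟨hu, ?_⟩
  set d' : Fin N → ℝ := fun j => (d j)⁻¹ with hd'
  set M : Matrix (Fin N) (Fin N) ℝ := P * Matrix.diagonal d' * Pᵀ with hM
  have hinv : ((1 : Matrix (Fin N) (Fin N) ℝ) - z • A)⁻¹ = M := by
    apply Matrix.inv_eq_right_inv
    rw [hfact, hM]
    simp only [Matrix.mul_assoc]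
    rw [← Matrix.mul_assoc Pᵀ P, hPt, Matrix.one_mul,
      ← Matrix.mul_assoc (Matrix.diagonal d), Matrix.diagonal_mul_diagonal]
    have : (fun i => d i * d' i) = (1 : Fin N → ℝ) := by
      funext j; simp [hd', mul_inv_cancel₀ (hdne j)]
    rw [this]
    have h1 : Matrix.diagonal (1 : Fin N → ℝ) = 1 := Matrix.diagonal_one
    rw [h1, Matrix.one_mul, horth]
  have hMapp : ∀ i j, M i j = ∑ m, P i m * d' m * P j m := by
    intro i j
    rw [hM, Matrix.mul_apply]
    congr 1; funext m
    rw [Matrix.mul_diagonal, Matrix.transpose_apply]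
  -- auxiliary matrices
  set B : Matrix (Fin N) (Fin N) ℝ :=
    fun i j => if i ∈ u then P i j * d' j else P i j with hB
  set C : Matrix (Fin N) (Fin N) ℝ :=
    fun i j => if i ∈ u then M i j else (if i = j then 1 else 0) with hC
  have hBC : B * Pᵀ = C := by
    ext i j
    rw [Matrix.mul_apply]
    by_cases h : i ∈ u
    · simp only [hB, hC, h, if_true, Matrix.transpose_apply, hMapp i j]
    · simp only [hB, hC, h, if_false, Matrix.transpose_apply]
      have := congrArg (fun X => X i j) horth
      simpa [Matrix.mul_apply, Matrix.one_apply] using this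
  have hdetB : B.det = ∑ σ : Equiv.Perm (Fin N),
      ((Equiv.Perm.sign σ : ℤ) : ℝ) * (∏ j : Fin N, P j (σ j)) *
        ∏ i ∈ u, (1 - z * lam (σ i))⁻¹ := by
    rw [← Matrix.det_transpose B, Matrix.det_apply']
    refine Finset.sum_congr rfl fun σ _ => ?_
    rw [mul_assoc]
    congr 1
    have : ∀ i, Bᵀ (σ i) i = B i (σ i) := fun i => rfl
    simp only [this, hB]
    have hsplit : ∀ i : Fin N, (if i ∈ u then P i (σ i) * d' (σ i) else P i (σ i))
        = P i (σ i) * (if i ∈ u then d' (σ i) else 1) := by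
      intro i; by_cases h : i ∈ u <;> simp [h]
    show (∏ i, (if i ∈ u then P i (σ i) * d' (σ i) else P i (σ i))) = _
    simp only [hsplit]
    rw [Finset.prod_mul_distrib]
    congr 1
    rw [Finset.prod_ite_mem, Finset.univ_inter]
  have hdetC : C.det = B.det := by
    rw [← hBC, Matrix.det_mul, Matrix.det_transpose, hdet, mul_one]
  -- block structure of C
  set e : {i // i ∈ u} ⊕ {i // i ∉ u} ≃ Fin N := Equiv.sumCompl (· ∈ u) with he
  have hCe : C.submatrix e e = Matrix.fromBlocks
      (M.submatrix (fun i : {i // i ∈ u} => (i : Fin N)) (fun i : {i // i ∈ u} => (i : Fin N)))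
      (M.submatrix (fun i : {i // i ∈ u} => (i : Fin N)) (fun i : {i // i ∉ u} => (i : Fin N)))
      0 1 := by
    ext i j
    cases i with
    | inl i =>
      cases j with
      | inl j => change C (e _) (e _) = _; simp [hC, he, i.2]
      | inr j => change C (e _) (e _) = _; simp [hC, he, i.2]
    | inr i =>
      cases j with
      | inl j =>
        have : (i : Fin N) ≠ (j : Fin N) := by
          intro h; exact i.2 (h ▸ j.2)
        change C (e _) (e _) = _
        simp [hC, he, i.2, this]
      | inr j =>
        change C (e _) (e _) = _
        simp [hC, he, i.2, Matrix.one_apply, Subtype.ext_iff]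
  have hdetC2 : C.det =
      Matrix.det (M.submatrix (fun i : {i // i ∈ u} => (i : Fin N))
        (fun i : {i // i ∈ u} => (i : Fin N))) := by
    rw [← Matrix.det_submatrix_equiv_self e C, hCe,
      Matrix.det_fromBlocks_zero₂₁, Matrix.det_one, mul_one]
  rw [hinv, ← hdetC2, hdetC, hdetB]
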